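/- arXiv:2509.05533 — 2 statements merged into one kernel-verified Lean document; each statement's English description precedes it below -/
import Mathlib

section
/- Let 0 < α < 1. There exists a constant c > 0 such that for every μ ≥ 1, ‖θ₊(·;μ)‖_{L²(0,1)} ≤ c/√μ and ‖θ₋(·;μ)‖_{L²(0,1)} ≤ c/√μ, where θ±(·;μ) denote the functions θ± built from the parameter μ. -/
open MeasureTheory

/-- The Bessel function of the first kind of real order `ν`. -/
noncomputable def besselJ (ν y : ℝ) : ℝ :=
  ∑' m : ℕ, ((-1) ^ m / (m.factorial * Real.Gamma (m + ν + 1))) *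
    (y / 2) ^ (2 * (m : ℝ) + ν)

/-- `θ₊(x;μ) = x^{(1-α)/2} J_{ν_α}((2/(2-α)) μ x^{(2-α)/2})`, `ν_α = (1-α)/(2-α)`. -/
noncomputable def thetaP (α μ x : ℝ) : ℝ :=
  x ^ ((1 - α) / 2) * besselJ ((1 - α) / (2 - α)) (2 / (2 - α) * μ * x ^ ((2 - α) / 2))

/-- `θ₋(x;μ) = x^{(1-α)/2} J_{-ν_α}((2/(2-α)) μ x^{(2-α)/2})`. -/
noncomputable def thetaM (α μ x : ℝ) : ℝ :=
  x ^ ((1 - α) / 2) * besselJ (-((1 - α) / (2 - α))) (2 / (2 - α) * μ * x ^ ((2 - α) / 2))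

section Stmt15Aux
open Filter


noncomputable def bc (σ : ℝ) (m : ℕ) : ℝ :=
  (-1) ^ m / (m.factorial * Real.Gamma (m + σ + 1))

lemma gamma_arg_pos {σ : ℝ} (hσ : -1/2 < σ) (m : ℕ) : 0 < (m : ℝ) + σ + 1 := by
  have : (0:ℝ) ≤ m := Nat.cast_nonneg m
  linarith

lemma gamma_pos {σ : ℝ} (hσ : -1/2 < σ) (m : ℕ) : 0 < Real.Gamma ((m : ℝ) + σ + 1) :=
  Real.Gamma_pos_of_pos (gamma_arg_pos hσ m)

lemma bc_abs {σ : ℝ} (hσ : -1/2 < σ) (m : ℕ) :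
    |bc σ m| = 1 / (m.factorial * Real.Gamma (m + σ + 1)) := by
  have h1 : (0:ℝ) < m.factorial := by positivity
  have h2 := gamma_pos hσ m
  rw [bc, abs_div, abs_pow, abs_neg, abs_one, one_pow, abs_of_pos (by positivity)]

lemma bc_pos_abs {σ : ℝ} (hσ : -1/2 < σ) (m : ℕ) : 0 < |bc σ m| := by
  rw [bc_abs hσ]
  have h1 : (0:ℝ) < m.factorial := by positivity
  have h2 := gamma_pos hσ m
  positivity

lemma bc_rec {σ : ℝ} (hσ : -1/2 < σ) (m : ℕ) :
    bc σ (m+1) * (((m:ℝ)+1) * ((m:ℝ) + σ + 1)) = - bc σ m := by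
  have h2 := gamma_pos hσ m
  have harg := gamma_arg_pos hσ m
  have hG : Real.Gamma ((m+1 : ℕ) + σ + 1) = ((m:ℝ) + σ + 1) * Real.Gamma ((m:ℝ) + σ + 1) := by
    have : ((m+1 : ℕ) : ℝ) + σ + 1 = ((m:ℝ) + σ + 1) + 1 := by push_cast; ring
    rw [this, Real.Gamma_add_one harg.ne']
  have hF : ((m+1).factorial : ℝ) = ((m:ℝ)+1) * m.factorial := by
    rw [Nat.factorial_succ]; push_cast; ring
  rw [bc, bc, hG, hF]
  have h1 : (0:ℝ) < m.factorial := by positivity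
  field_simp
  ring

lemma bc_abs_rec {σ : ℝ} (hσ : -1/2 < σ) (m : ℕ) :
    |bc σ (m+1)| * (((m:ℝ)+1) * ((m:ℝ) + σ + 1)) = |bc σ m| := by
  have harg := gamma_arg_pos hσ m
  have h : |bc σ (m+1) * (((m:ℝ)+1) * ((m:ℝ) + σ + 1))| = |bc σ m| := by
    rw [bc_rec hσ m, abs_neg]
  have hp : (0:ℝ) < ((m:ℝ)+1) * ((m:ℝ) + σ + 1) :=
    mul_pos (by positivity) harg
  rw [abs_mul, abs_of_pos hp] at h
  exact h

lemma bc_succ_le {σ : ℝ} (hσ : -1/2 < σ) (m : ℕ) : |bc σ (m+1)| ≤ 2 * |bc σ m| := by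
  have h := bc_abs_rec hσ m
  have h2 : (1:ℝ)/2 ≤ ((m:ℝ)+1) * ((m:ℝ) + σ + 1) := by
    have hm : (0:ℝ) ≤ m := Nat.cast_nonneg m
    nlinarith
  nlinarith [abs_nonneg (bc σ (m+1)), abs_nonneg (bc σ m)]

lemma summable_bc {σ : ℝ} (hσ : -1/2 < σ) (k : ℕ) {r : ℝ} (hr : 0 ≤ r) :
    Summable (fun m : ℕ => |bc σ m| * ((m:ℝ)+1)^k * r^m) := by
  apply summable_of_ratio_norm_eventually_le (r := 1/2) (by norm_num)
  rw [eventually_atTop]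
  refine ⟨Nat.ceil ((2:ℝ)^(k+2) * r), fun m hm => ?_⟩
  have hm' : (2:ℝ)^(k+2) * r ≤ m := le_trans (Nat.le_ceil _) (by exact_mod_cast hm)
  have hbc := bc_abs_rec hσ m
  have hbcpos := bc_pos_abs hσ m
  have hbcpos1 := bc_pos_abs hσ (m+1)
  have hmn : (0:ℝ) ≤ m := Nat.cast_nonneg m
  have harg := gamma_arg_pos hσ m
  -- |bc (m+1)| = |bc m| / ((m+1)(m+σ+1))
  have hD : (0:ℝ) < ((m:ℝ)+1) * ((m:ℝ) + σ + 1) := mul_pos (by positivity) harg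
  have hb1 : |bc σ (m+1)| = |bc σ m| / (((m:ℝ)+1) * ((m:ℝ) + σ + 1)) := by
    rw [eq_div_iff hD.ne']
    exact hbc
  have hnorm : ∀ x : ℝ, 0 ≤ x → ‖x‖ = x := fun x hx => by rw [Real.norm_eq_abs, abs_of_nonneg hx]
  rw [hnorm _ (by positivity), hnorm _ (by positivity)]
  -- goal: |bc (m+1)| * (m+2)^k * r^(m+1) ≤ 1/2 * (|bc m| * (m+1)^k * r^m)
  rw [hb1]
  have hpow : ((m:ℝ)+1+1)^k ≤ 2^k * ((m:ℝ)+1)^k := by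
    rw [← mul_pow]
    apply pow_le_pow_left₀ (by linarith)
    linarith
  have hrm : (0:ℝ) ≤ r^m := by positivity
  have key : r * (((m:ℝ)+1) * ((m:ℝ) + σ + 1))⁻¹ * ((m:ℝ)+1+1)^k ≤ 1/2 * ((m:ℝ)+1)^k := by
    have h1 : ((m:ℝ)+1)/2 ≤ ((m:ℝ)+1) * ((m:ℝ) + σ + 1) := by nlinarith
    have h2 : (((m:ℝ)+1) * ((m:ℝ) + σ + 1))⁻¹ ≤ 2/((m:ℝ)+1) := by
      rw [inv_le_iff_one_le_mul₀ (by nlinarith)]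
      rw [div_mul_eq_mul_div, le_div_iff₀ (by linarith)]
      nlinarith
    calc r * (((m:ℝ)+1) * ((m:ℝ) + σ + 1))⁻¹ * ((m:ℝ)+1+1)^k
        ≤ r * (2/((m:ℝ)+1)) * (2^k * ((m:ℝ)+1)^k) := by
          apply mul_le_mul
          · apply mul_le_mul_of_nonneg_left h2 hr
          · exact hpow
          · positivity
          · positivity
      _ ≤ 1/2 * ((m:ℝ)+1)^k := by
          rw [show r * (2/((m:ℝ)+1)) * (2^k * ((m:ℝ)+1)^k)
              = (r * 2^(k+1) / ((m:ℝ)+1)) * ((m:ℝ)+1)^k by ring]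
          apply mul_le_mul_of_nonneg_right _ (by positivity)
          rw [div_le_iff₀ (by linarith)]
          have h3 : (2:ℝ)^(k+2) * r ≤ m + 1 := by linarith
          have h4 : (2:ℝ)^(k+2) = 2 * 2^(k+1) := by rw [pow_succ]; ring
          nlinarith [pow_pos (show (0:ℝ) < 2 by norm_num) (k+1)]
  push_cast
  have expand : |bc σ m| / (((m:ℝ)+1) * ((m:ℝ) + σ + 1)) * ((m:ℝ)+1+1)^k * r^(m+1)
      = |bc σ m| * r^m * (r * (((m:ℝ)+1) * ((m:ℝ) + σ + 1))⁻¹ * ((m:ℝ)+1+1)^k) := by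
    rw [pow_succ]; ring
  rw [expand]
  have step := mul_le_mul_of_nonneg_left key (show (0:ℝ) ≤ |bc σ m| * r^m by positivity)
  calc |bc σ m| * r^m * (r * (((m:ℝ)+1) * ((m:ℝ) + σ + 1))⁻¹ * ((m:ℝ)+1+1)^k)
      ≤ |bc σ m| * r^m * (1/2 * ((m:ℝ)+1)^k) := step
    _ = 1/2 * (|bc σ m| * ((m:ℝ)+1)^k * r^m) := by ring

-- generic comparison helper
lemma summable_of_bc {σ : ℝ} (hσ : -1/2 < σ) (k : ℕ) {r : ℝ} (hr : 0 ≤ r) (C : ℝ)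
    (f : ℕ → ℝ) (hf : ∀ m, |f m| ≤ C * (|bc σ m| * ((m:ℝ)+1)^k * r^m)) :
    Summable f := by
  apply Summable.of_norm_bounded ((summable_bc hσ k hr).mul_left C)
  intro m
  simpa using hf m

noncomputable def gg (σ t : ℝ) : ℝ := ∑' m : ℕ, bc σ m * t^m
noncomputable def gg1 (σ t : ℝ) : ℝ := ∑' m : ℕ, bc σ (m+1) * ((m:ℝ)+1) * t^m
noncomputable def gg2 (σ t : ℝ) : ℝ := ∑' m : ℕ, bc σ (m+2) * ((m:ℝ)+2) * ((m:ℝ)+1) * t^m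

lemma summable_gg {σ : ℝ} (hσ : -1/2 < σ) (t : ℝ) :
    Summable (fun m : ℕ => bc σ m * t^m) := by
  apply summable_of_bc hσ 0 (abs_nonneg t) 1
  intro m
  rw [abs_mul, abs_pow]
  simp

lemma summable_gg1 {σ : ℝ} (hσ : -1/2 < σ) (t : ℝ) :
    Summable (fun m : ℕ => bc σ (m+1) * ((m:ℝ)+1) * t^m) := by
  apply summable_of_bc hσ 1 (abs_nonneg t) 2
  intro m
  rw [abs_mul, abs_mul, abs_pow, abs_of_pos (show (0:ℝ) < (m:ℝ)+1 by positivity)]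
  have := bc_succ_le hσ m
  have h2 : (0:ℝ) ≤ ((m:ℝ)+1) * |t|^m := by positivity
  calc |bc σ (m+1)| * ((m:ℝ)+1) * |t|^m ≤ 2*|bc σ m| * ((m:ℝ)+1) * |t|^m := by
        apply mul_le_mul_of_nonneg_right _ (by positivity)
        exact mul_le_mul_of_nonneg_right this (by positivity)
    _ = 2 * (|bc σ m| * ((m:ℝ)+1)^1 * |t|^m) := by ring

lemma summable_gg2 {σ : ℝ} (hσ : -1/2 < σ) (t : ℝ) :
    Summable (fun m : ℕ => bc σ (m+2) * ((m:ℝ)+2) * ((m:ℝ)+1) * t^m) := by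
  apply summable_of_bc hσ 2 (abs_nonneg t) 8
  intro m
  rw [abs_mul, abs_mul, abs_mul, abs_pow,
    abs_of_pos (show (0:ℝ) < (m:ℝ)+2 by positivity),
    abs_of_pos (show (0:ℝ) < (m:ℝ)+1 by positivity)]
  have h1 := bc_succ_le hσ (m+1)
  have h2 := bc_succ_le hσ m
  have h3 : |bc σ (m+2)| ≤ 4 * |bc σ m| := by
    push_cast at h1
    calc |bc σ (m+2)| ≤ 2 * |bc σ (m+1)| := by exact_mod_cast h1
      _ ≤ 4 * |bc σ m| := by linarith [bc_pos_abs hσ m]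
  have h4 : ((m:ℝ)+2) * ((m:ℝ)+1) ≤ 2 * ((m:ℝ)+1)^2 := by nlinarith [Nat.cast_nonneg (α := ℝ) m]
  have hb := abs_nonneg (bc σ m)
  have htm : (0:ℝ) ≤ |t|^m := by positivity
  calc |bc σ (m+2)| * ((m:ℝ)+2) * ((m:ℝ)+1) * |t|^m
      ≤ (4*|bc σ m|) * ((m:ℝ)+2) * ((m:ℝ)+1) * |t|^m := by
        have : (0:ℝ) ≤ ((m:ℝ)+2) * ((m:ℝ)+1) * |t|^m := by positivity
        nlinarith
    _ = (4*|bc σ m|) * (((m:ℝ)+2) * ((m:ℝ)+1)) * |t|^m := by ring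
    _ ≤ (4*|bc σ m|) * (2 * ((m:ℝ)+1)^2) * |t|^m := by
        apply mul_le_mul_of_nonneg_right _ htm
        exact mul_le_mul_of_nonneg_left h4 (by positivity)
    _ = 8 * (|bc σ m| * ((m:ℝ)+1)^2 * |t|^m) := by ring

/-- generic: derivative of a power series whose coefficients (with weights) are summable. -/
lemma hasDerivAt_tsum_pow (c : ℕ → ℝ)
    (h : ∀ R : ℝ, 0 ≤ R → Summable (fun m : ℕ => |c m| * ((m:ℝ)+1) * R^m)) (t : ℝ) :
    HasDerivAt (fun x => ∑' m : ℕ, c m * x^m) (∑' m : ℕ, c (m+1) * ((m:ℝ)+1) * t^m) t := by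
  set R : ℝ := |t| + 1 with hR
  have hR1 : 1 ≤ R := by have := abs_nonneg t; simp only [hR]; linarith
  have hR0 : 0 ≤ R := by linarith
  have hmem : t ∈ Set.Ioo (-R) R := by
    constructor
    · have := neg_abs_le t; simp only [hR]; linarith
    · have := le_abs_self t; simp only [hR]; linarith
  have hsum : Summable (fun m : ℕ => |c m| * ((m:ℝ)+1) * R^m) := h R hR0
  have hbound : ∀ (x : ℝ), |x| ≤ R → ∀ m : ℕ,
      ‖c m * (m:ℝ) * x^(m-1)‖ ≤ |c m| * ((m:ℝ)+1) * R^m := by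
    intro x hxR m
    rw [Real.norm_eq_abs, abs_mul, abs_mul, abs_pow, Nat.abs_cast]
    have h1 : |x| ^ (m-1) ≤ R^m :=
      le_trans (pow_le_pow_left₀ (abs_nonneg x) hxR _) (pow_le_pow_right₀ hR1 (Nat.sub_le m 1))
    have h2 : (m:ℝ) ≤ (m:ℝ)+1 := by linarith
    exact mul_le_mul (mul_le_mul_of_nonneg_left h2 (abs_nonneg _)) h1
      (pow_nonneg (abs_nonneg x) _) (by positivity)
  have key : HasDerivAt (fun x => ∑' m : ℕ, c m * x^m)
      (∑' m : ℕ, c m * (m:ℝ) * t^(m-1)) t := by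
    apply hasDerivAt_of_tendstoUniformlyOn (l := atTop)
      (f := fun n x => ∑ m ∈ Finset.range n, c m * x^m)
      (f' := fun n x => ∑ m ∈ Finset.range n, c m * (m:ℝ) * x^(m-1))
      (isOpen_Ioo) _ _ _ hmem
    · apply tendstoUniformlyOn_tsum_nat hsum
      intro m x hx
      exact hbound x (by rw [abs_le]; exact ⟨hx.1.le, hx.2.le⟩) m
    · filter_upwards with n x _
      apply HasDerivAt.fun_sum
      intro m _
      simpa [mul_assoc] using (hasDerivAt_pow m x).const_mul (c m)
    · intro x hx
      have hsx : Summable (fun m : ℕ => c m * x^m) := by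
        apply Summable.of_norm_bounded hsum
        intro m
        rw [Real.norm_eq_abs, abs_mul, abs_pow]
        have hxR : |x| ≤ R := by rw [abs_le]; exact ⟨hx.1.le, hx.2.le⟩
        have h1 : |x|^m ≤ R^m := pow_le_pow_left₀ (abs_nonneg x) hxR m
        have h2 : (1:ℝ) ≤ (m:ℝ)+1 := by
          have : (0:ℝ) ≤ m := Nat.cast_nonneg m
          linarith
        calc |c m| * |x|^m ≤ |c m| * R^m := mul_le_mul_of_nonneg_left h1 (abs_nonneg _)
          _ = 1 * (|c m| * R^m) := by ring
          _ ≤ ((m:ℝ)+1) * (|c m| * R^m) := mul_le_mul_of_nonneg_right h2 (by positivity)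
          _ = |c m| * ((m:ℝ)+1) * R^m := by ring
      exact hsx.hasSum.tendsto_sum_nat
  have hsum2 : Summable (fun m : ℕ => c m * (m:ℝ) * t^(m-1)) := by
    apply Summable.of_norm_bounded hsum
    intro m
    exact hbound t (by simp [hR]) m
  have hshift : (∑' m : ℕ, c m * (m:ℝ) * t^(m-1)) = ∑' m : ℕ, c (m+1) * ((m:ℝ)+1) * t^m := by
    rw [Summable.tsum_eq_zero_add hsum2]
    simp only [Nat.cast_zero, mul_zero, zero_mul, zero_add, Nat.add_sub_cancel]
    congr 1
    funext m
    push_cast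
    ring
  rw [← hshift]
  exact key

lemma hasDerivAt_gg {σ : ℝ} (hσ : -1/2 < σ) (t : ℝ) :
    HasDerivAt (gg σ) (gg1 σ t) t := by
  have h : ∀ R : ℝ, 0 ≤ R → Summable fun m : ℕ => |bc σ m| * ((m:ℝ)+1) * R^m := by
    intro R hR0
    simpa [pow_one] using summable_bc hσ 1 hR0
  exact hasDerivAt_tsum_pow (bc σ) h t

lemma hasDerivAt_gg1 {σ : ℝ} (hσ : -1/2 < σ) (t : ℝ) :
    HasDerivAt (gg1 σ) (gg2 σ t) t := by
  have hsm : ∀ R : ℝ, 0 ≤ R →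
      Summable (fun m : ℕ => |bc σ (m+1) * ((m:ℝ)+1)| * ((m:ℝ)+1) * R^m) := by
    intro R hR0
    apply summable_of_bc hσ 2 hR0 2
    intro m
    have h1 := bc_succ_le hσ m
    have hp : (0:ℝ) < (m:ℝ)+1 := by positivity
    have hb : |bc σ (m+1) * ((m:ℝ)+1)| = |bc σ (m+1)| * ((m:ℝ)+1) := by
      rw [abs_mul, abs_of_pos hp]
    rw [abs_mul, abs_mul, abs_abs, hb, abs_of_pos hp, abs_of_nonneg (pow_nonneg hR0 m)]
    have step := mul_le_mul_of_nonneg_right h1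
      (show (0:ℝ) ≤ ((m:ℝ)+1)*((m:ℝ)+1)*R^m by positivity)
    calc |bc σ (m+1)| * ((m:ℝ)+1) * ((m:ℝ)+1) * R^m
        = |bc σ (m+1)| * (((m:ℝ)+1)*((m:ℝ)+1)*R^m) := by ring
      _ ≤ 2 * |bc σ m| * (((m:ℝ)+1)*((m:ℝ)+1)*R^m) := step
      _ = 2 * (|bc σ m| * ((m:ℝ)+1)^2 * R^m) := by ring
  have key := hasDerivAt_tsum_pow (fun m => bc σ (m+1) * ((m:ℝ)+1)) hsm t
  have h2 : gg2 σ t = ∑' m : ℕ,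
      (fun m => bc σ (m+1) * ((m:ℝ)+1)) (m+1) * ((m:ℝ)+1) * t^m := by
    unfold gg2
    congr 1
    funext m
    push_cast
    ring
  unfold gg1
  rw [h2]
  exact key

lemma gg_ode {σ : ℝ} (hσ : -1/2 < σ) (t : ℝ) :
    t * gg2 σ t + (σ+1) * gg1 σ t + gg σ t = 0 := by
  have hs2 := summable_gg2 hσ t
  have hs1 := summable_gg1 hσ t
  have hs0 := summable_gg hσ t
  set h : ℕ → ℝ := fun m => bc σ (m+1) * ((m:ℝ)+1) * (m:ℝ) * t^m with hh
  have hsh : Summable h := by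
    apply summable_of_bc hσ 2 (abs_nonneg t) 2
    intro m
    have h1 := bc_succ_le hσ m
    have hmn : (0:ℝ) ≤ (m:ℝ) := Nat.cast_nonneg m
    have e1 : |h m| = |bc σ (m+1)| * (((m:ℝ)+1) * (m:ℝ) * |t|^m) := by
      rw [hh]
      simp only []
      rw [abs_mul, abs_mul, abs_mul, abs_pow,
        abs_of_nonneg (show (0:ℝ) ≤ (m:ℝ)+1 by linarith), abs_of_nonneg hmn]
      ring
    rw [e1]
    have h2 : ((m:ℝ)+1) * (m:ℝ) * |t|^m ≤ ((m:ℝ)+1)^2 * |t|^m := by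
      apply mul_le_mul_of_nonneg_right _ (pow_nonneg (abs_nonneg t) m)
      nlinarith
    calc |bc σ (m+1)| * (((m:ℝ)+1) * (m:ℝ) * |t|^m)
        ≤ (2*|bc σ m|) * (((m:ℝ)+1)^2 * |t|^m) := by
          apply mul_le_mul h1 h2 (by positivity) (by positivity)
      _ = 2 * (|bc σ m| * ((m:ℝ)+1)^2 * |t|^m) := by ring
  have step1 : t * gg2 σ t = ∑' m, h m := by
    unfold gg2
    rw [← tsum_mul_left, Summable.tsum_eq_zero_add hsh]
    have h0 : h 0 = 0 := by simp [hh]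
    rw [h0, zero_add]
    congr 1
    funext m
    simp only [hh]
    push_cast
    ring
  have step2 : (σ+1) * gg1 σ t = ∑' m, bc σ (m+1) * ((m:ℝ)+1) * (σ+1) * t^m := by
    unfold gg1
    rw [← tsum_mul_left]
    congr 1
    funext m
    ring
  have hsh2 : Summable (fun m : ℕ => bc σ (m+1) * ((m:ℝ)+1) * (σ+1) * t^m) :=
    (hs1.mul_left (σ+1)).congr (fun m => by ring)
  have step3 : t * gg2 σ t + (σ+1) * gg1 σ t = ∑' m : ℕ, -(bc σ m * t^m) := by
    rw [step1, step2, ← Summable.tsum_add hsh hsh2]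
    congr 1
    funext m
    have hrec := bc_rec hσ m
    calc h m + bc σ (m+1)*((m:ℝ)+1)*(σ+1)*t^m
        = (bc σ (m+1) * (((m:ℝ)+1)*((m:ℝ)+σ+1))) * t^m := by simp only [hh]; ring
      _ = -(bc σ m * t^m) := by rw [hrec]; ring
  rw [tsum_neg] at step3
  have hgg : (∑' m : ℕ, bc σ m * t^m) = gg σ t := rfl
  rw [hgg] at step3
  linarith

lemma besselJ_eq {σ y : ℝ} (hy : 0 < y) :
    besselJ σ y = (y/2)^σ * gg σ (y^2/4) := by
  unfold besselJ gg
  rw [← tsum_mul_left]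
  congr 1
  funext m
  have hy2 : (0:ℝ) < y/2 := by linarith
  have hr : (y/2 : ℝ) ^ (2*(m:ℝ)+σ) = ((y/2)^2)^m * (y/2)^σ := by
    rw [Real.rpow_add hy2]
    congr 1
    rw [show (2*(m:ℝ)) = ((2*m : ℕ):ℝ) by push_cast; ring, Real.rpow_natCast, pow_mul]
  rw [hr, show ((y/2)^2 : ℝ) = y^2/4 by ring]
  simp only [bc]
  ring

noncomputable def Cs (σ : ℝ) : ℝ := (2:ℝ)^(-σ) * ∑' m : ℕ, |bc σ m| * (1/4 : ℝ)^m

lemma Cs_nonneg (σ : ℝ) : 0 ≤ Cs σ := by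
  unfold Cs
  apply mul_nonneg (Real.rpow_nonneg (by norm_num) _)
  exact tsum_nonneg (fun m => by positivity)

lemma besselJ_small {σ y : ℝ} (hσ : -1/2 < σ) (hy0 : 0 < y) (hy1 : y ≤ 1) :
    |besselJ σ y| ≤ Cs σ * y^σ := by
  have hy2 : (0:ℝ) < y/2 := by linarith
  rw [besselJ_eq hy0, abs_mul, abs_of_pos (Real.rpow_pos_of_pos hy2 σ)]
  have hsn : Summable (fun m : ℕ => ‖bc σ m * (y^2/4)^m‖) := by
    have := summable_gg hσ (|y^2/4|)
    apply Summable.of_nonneg_of_le (fun m => norm_nonneg _) (fun m => ?_)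
      ((summable_bc hσ 0 (by positivity : (0:ℝ) ≤ (1:ℝ)/4)))
    rw [Real.norm_eq_abs, abs_mul, abs_pow]
    have h14 : |y^2/4| ≤ 1/4 := by
      rw [abs_of_nonneg (by positivity)]
      nlinarith
    calc |bc σ m| * |y^2/4|^m ≤ |bc σ m| * (1/4)^m := by
          apply mul_le_mul_of_nonneg_left (pow_le_pow_left₀ (abs_nonneg _) h14 m) (abs_nonneg _)
      _ = |bc σ m| * ((m:ℝ)+1)^0 * (1/4)^m := by ring
  have h1 : |gg σ (y^2/4)| ≤ ∑' m : ℕ, |bc σ m| * (1/4 : ℝ)^m := by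
    unfold gg
    refine le_trans (norm_tsum_le_tsum_norm hsn) (Summable.tsum_le_tsum (fun m => ?_) hsn ?_)
    · rw [Real.norm_eq_abs, abs_mul, abs_pow]
      apply mul_le_mul_of_nonneg_left _ (abs_nonneg _)
      apply pow_le_pow_left₀ (abs_nonneg _) _ m
      rw [abs_of_nonneg (by positivity)]
      nlinarith
    · simpa using summable_bc hσ 0 (by positivity : (0:ℝ) ≤ (1:ℝ)/4)
  have h2 : ((y/2:ℝ))^σ = y^σ * (2:ℝ)^(-σ) := by
    rw [Real.div_rpow hy0.le (by norm_num), Real.rpow_neg (by norm_num)]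
    ring
  calc (y/2:ℝ)^σ * |gg σ (y^2/4)| ≤ (y/2:ℝ)^σ * ∑' m : ℕ, |bc σ m| * (1/4 : ℝ)^m :=
        mul_le_mul_of_nonneg_left h1 (Real.rpow_nonneg (by linarith) σ)
    _ = Cs σ * y^σ := by rw [h2]; unfold Cs; ring

noncomputable def uu (σ y : ℝ) : ℝ := (2:ℝ)^(-σ) * (y^(σ+1/2) * gg σ (y^2/4))
noncomputable def vv (σ y : ℝ) : ℝ :=
  (2:ℝ)^(-σ) * ((σ+1/2) * y^(σ-1/2) * gg σ (y^2/4) + (1/2) * y^(σ+3/2) * gg1 σ (y^2/4))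
noncomputable def EE (σ y : ℝ) : ℝ := (uu σ y)^2 + (vv σ y)^2

lemma hasDerivAt_sq4 (y : ℝ) : HasDerivAt (fun y : ℝ => y^2/4) (y/2) y := by
  have := (hasDerivAt_pow 2 y).div_const 4
  exact this.congr_deriv (by rw [show (2:ℕ)-1 = 1 from rfl]; push_cast; ring)

lemma hasDerivAt_gg_comp {σ : ℝ} (hσ : -1/2 < σ) (y : ℝ) :
    HasDerivAt (fun y : ℝ => gg σ (y^2/4)) (gg1 σ (y^2/4) * (y/2)) y :=
  by have := (hasDerivAt_gg hσ (y^2/4)).comp y (hasDerivAt_sq4 y); exact this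

lemma hasDerivAt_gg1_comp {σ : ℝ} (hσ : -1/2 < σ) (y : ℝ) :
    HasDerivAt (fun y : ℝ => gg1 σ (y^2/4)) (gg2 σ (y^2/4) * (y/2)) y :=
  by have := (hasDerivAt_gg1 hσ (y^2/4)).comp y (hasDerivAt_sq4 y); exact this

lemma hasDerivAt_rpow' {y p : ℝ} (hy : 0 < y) (q : ℝ) (hq : p - 1 = q) :
    HasDerivAt (fun y : ℝ => y^p) (p * y^q) y := by
  have := Real.hasDerivAt_rpow_const (x := y) (p := p) (Or.inl hy.ne')
  rwa [hq] at this

lemma hasDerivAt_uu {σ y : ℝ} (hσ : -1/2 < σ) (hy : 0 < y) :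
    HasDerivAt (uu σ) (vv σ y) y := by
  have hpow := hasDerivAt_rpow' hy (σ-1/2) (by ring : σ+1/2-1 = σ-1/2)
  have hprod := (hpow.mul (hasDerivAt_gg_comp hσ y)).const_mul ((2:ℝ)^(-σ))
  have e : y^(σ+3/2) = y^(σ+1/2) * y := by
    rw [show σ+3/2 = σ+1/2+1 by ring, Real.rpow_add_one hy.ne']
  unfold uu vv
  refine hprod.congr_deriv (Eq.symm ?_)
  rw [e]
  ring

lemma hasDerivAt_vv {σ y : ℝ} (hσ : -1/2 < σ) (hy : 0 < y) :
    HasDerivAt (vv σ) ((σ^2-1/4-y^2) * y^(σ-3/2) * (2:ℝ)^(-σ) * gg σ (y^2/4)) y := by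
  have h1 := (hasDerivAt_rpow' hy (σ-3/2) (by ring : σ-1/2-1 = σ-3/2)).const_mul (σ+1/2)
  have h2 := (hasDerivAt_rpow' hy (σ+1/2) (by ring : σ+3/2-1 = σ+1/2)).const_mul ((1:ℝ)/2)
  have term1 := h1.mul (hasDerivAt_gg_comp hσ y)
  have term2 := h2.mul (hasDerivAt_gg1_comp hσ y)
  have total := (term1.add term2).const_mul ((2:ℝ)^(-σ))
  have hode := gg_ode hσ (y^2/4)
  have e1 : y^(σ-1/2) = y^(σ-3/2)*y := by
    rw [show σ-1/2 = σ-3/2+1 by ring, Real.rpow_add_one hy.ne']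
  have e2 : y^(σ+1/2) = y^(σ-3/2)*y*y := by
    rw [show σ+1/2 = σ-3/2+1+1 by ring, Real.rpow_add_one hy.ne', Real.rpow_add_one hy.ne']
  have e3 : y^(σ+3/2) = y^(σ-3/2)*y*y*y := by
    rw [show σ+3/2 = σ-3/2+1+1+1 by ring, Real.rpow_add_one hy.ne',
      Real.rpow_add_one hy.ne', Real.rpow_add_one hy.ne']
  unfold vv
  refine total.congr_deriv (Eq.symm ?_)
  rw [e1, e2, e3]
  linear_combination (-((2:ℝ)^(-σ) * y^(σ-3/2) * y^2)) * hode

lemma uu_sq_eq {σ y : ℝ} (hσ : -1/2 < σ) (hy : 0 < y) :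
    (besselJ σ y)^2 * y = (uu σ y)^2 := by
  rw [besselJ_eq hy]
  have h2 : ((y/2:ℝ))^σ = y^σ * (2:ℝ)^(-σ) := by
    rw [Real.div_rpow hy.le (by norm_num), Real.rpow_neg (by norm_num)]
    ring
  have h3 : y^(σ+1/2) = y^σ * y^(1/2 : ℝ) := by rw [Real.rpow_add hy]
  have h4 : (y^((1:ℝ)/2))^2 = y := by
    rw [← Real.rpow_natCast (y^((1:ℝ)/2)) 2, ← Real.rpow_mul hy.le]
    norm_num
  unfold uu
  rw [h2, h3]
  have : (y ^ ((1:ℝ)/2))^2 = y := h4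
  nlinarith [this]

lemma vv_deriv_form {σ y : ℝ} (hσ : -1/2 < σ) (hy : 0 < y) :
    HasDerivAt (vv σ) (((σ^2-1/4)/y^2 - 1) * uu σ y) y := by
  have h := hasDerivAt_vv hσ hy
  have e2 : y^(σ+1/2) = y^(σ-3/2)*y*y := by
    rw [show σ+1/2 = σ-3/2+1+1 by ring, Real.rpow_add_one hy.ne', Real.rpow_add_one hy.ne']
  have heq : (σ^2-1/4-y^2) * y^(σ-3/2) * (2:ℝ)^(-σ) * gg σ (y^2/4)
      = ((σ^2-1/4)/y^2 - 1) * uu σ y := by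
    unfold uu
    rw [e2]
    field_simp
  rwa [heq] at h

lemma hasDerivAt_EE {σ y : ℝ} (hσ : -1/2 < σ) (hy : 0 < y) :
    HasDerivAt (EE σ) (2 * ((σ^2-1/4)/y^2) * (uu σ y * vv σ y)) y := by
  have hu := hasDerivAt_uu hσ hy
  have hv := vv_deriv_form hσ hy
  have h := (hu.mul hu).add (hv.mul hv)
  have : HasDerivAt (fun y => uu σ y * uu σ y + vv σ y * vv σ y)
      (vv σ y * uu σ y + uu σ y * vv σ y +
        ((((σ^2-1/4)/y^2 - 1) * uu σ y) * vv σ y +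
          vv σ y * (((σ^2-1/4)/y^2 - 1) * uu σ y))) y := h
  have hfun : EE σ = fun y => uu σ y * uu σ y + vv σ y * vv σ y := by
    funext z
    unfold EE
    ring
  rw [hfun]
  convert this using 1
  ring

lemma EE_antitone {σ : ℝ} (hσ1 : -1/2 < σ) (hσ2 : σ < 1/2) {y : ℝ} (hy : 1 ≤ y) :
    EE σ y * Real.exp ((1/4-σ^2) * y⁻¹) ≤ EE σ 1 * Real.exp (1/4-σ^2) := by
  set k : ℝ := 1/4 - σ^2 with hk
  have hk0 : 0 < k := by
    rw [hk]
    nlinarith [mul_pos (show (0:ℝ) < 1/2 - σ by linarith) (show (0:ℝ) < 1/2 + σ by linarith)]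
  set φ : ℝ → ℝ := fun y => EE σ y * Real.exp (k * y⁻¹) with hφ
  have hder : ∀ z : ℝ, 0 < z → HasDerivAt φ
      ((2 * ((σ^2-1/4)/z^2) * (uu σ z * vv σ z)) * Real.exp (k * z⁻¹)
        + EE σ z * (Real.exp (k * z⁻¹) * (k * (-(z^2)⁻¹)))) z := by
    intro z hz
    have hexp : HasDerivAt (fun z : ℝ => Real.exp (k * z⁻¹))
        (Real.exp (k * z⁻¹) * (k * (-(z^2)⁻¹))) z :=
      ((hasDerivAt_inv hz.ne').const_mul k).exp
    exact (hasDerivAt_EE hσ1 hz).mul hexp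
  have hanti : AntitoneOn φ (Set.Ici 1) := by
    apply antitoneOn_of_deriv_nonpos (convex_Ici 1)
    · intro z hz
      have hz0 : (0:ℝ) < z := lt_of_lt_of_le one_pos hz
      exact (hder z hz0).continuousAt.continuousWithinAt
    · intro z hz
      rw [interior_Ici] at hz
      have hz0 : (0:ℝ) < z := lt_trans one_pos hz
      exact (hder z hz0).differentiableAt.differentiableWithinAt
    · intro z hz
      rw [interior_Ici] at hz
      have hz0 : (0:ℝ) < z := lt_trans one_pos hz
      rw [(hder z hz0).deriv]
      have hE : -(2 * uu σ z * vv σ z) ≤ EE σ z := by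
        unfold EE
        nlinarith [sq_nonneg (uu σ z + vv σ z)]
      have hexp0 : 0 < Real.exp (k * z⁻¹) := Real.exp_pos _
      have hz2 : (0:ℝ) < z^2 := by positivity
      have key : 2 * ((σ^2-1/4)/z^2) * (uu σ z * vv σ z) ≤ EE σ z * (k * (z^2)⁻¹) := by
        have h1 : 2 * ((σ^2-1/4)/z^2) * (uu σ z * vv σ z)
            = (k * (z^2)⁻¹) * (-(2 * uu σ z * vv σ z)) := by
          rw [hk]
          field_simp
          ring
        rw [h1]
        have h2 : 0 < k * (z^2)⁻¹ := by positivity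
        calc (k * (z^2)⁻¹) * (-(2 * uu σ z * vv σ z))
            ≤ (k * (z^2)⁻¹) * EE σ z := mul_le_mul_of_nonneg_left hE h2.le
          _ = EE σ z * (k * (z^2)⁻¹) := by ring
      calc 2 * ((σ^2-1/4)/z^2) * (uu σ z * vv σ z) * Real.exp (k * z⁻¹)
            + EE σ z * (Real.exp (k * z⁻¹) * (k * (-(z^2)⁻¹)))
          ≤ EE σ z * (k * (z^2)⁻¹) * Real.exp (k * z⁻¹)
            + EE σ z * (Real.exp (k * z⁻¹) * (k * (-(z^2)⁻¹))) := by
            exact add_le_add (mul_le_mul_of_nonneg_right key hexp0.le) le_rfl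
        _ = 0 := by ring
  have h1m : (1:ℝ) ∈ Set.Ici (1:ℝ) := Set.self_mem_Ici
  have hym : y ∈ Set.Ici (1:ℝ) := hy
  have := hanti h1m hym hy
  simpa [hφ] using this

lemma EE_nonneg (σ y : ℝ) : 0 ≤ EE σ y := by unfold EE; positivity

lemma besselJ_large {σ y : ℝ} (hσ1 : -1/2 < σ) (hσ2 : σ < 1/2) (hy : 1 ≤ y) :
    (besselJ σ y)^2 * y ≤ EE σ 1 * Real.exp (1/4 - σ^2) := by
  have hy0 : (0:ℝ) < y := lt_of_lt_of_le one_pos hy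
  rw [uu_sq_eq hσ1 hy0]
  have h1 : (uu σ y)^2 ≤ EE σ y := by unfold EE; nlinarith [sq_nonneg (vv σ y)]
  have hk0 : (0:ℝ) < 1/4 - σ^2 := by
    nlinarith [mul_pos (show (0:ℝ) < 1/2 - σ by linarith) (show (0:ℝ) < 1/2 + σ by linarith)]
  have h2 : (1:ℝ) ≤ Real.exp ((1/4-σ^2) * y⁻¹) := by
    have hyi : (0:ℝ) ≤ y⁻¹ := by positivity
    exact Real.one_le_exp (mul_nonneg hk0.le hyi)
  calc (uu σ y)^2 ≤ EE σ y := h1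
    _ ≤ EE σ y * Real.exp ((1/4-σ^2) * y⁻¹) := le_mul_of_one_le_right (EE_nonneg σ y) h2
    _ ≤ EE σ 1 * Real.exp (1/4-σ^2) := EE_antitone hσ1 hσ2 hy

noncomputable def KK (σ : ℝ) : ℝ := EE σ 1 * Real.exp (1/4 - σ^2)

lemma KK_nonneg (σ : ℝ) : 0 ≤ KK σ :=
  mul_nonneg (EE_nonneg σ 1) (Real.exp_pos _).le

lemma besselJ_continuousOn {σ : ℝ} (hσ : -1/2 < σ) :
    ContinuousOn (besselJ σ) (Set.Ioi (0:ℝ)) := by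
  have hg : Continuous (gg σ) :=
    continuous_iff_continuousAt.mpr fun t => (hasDerivAt_gg hσ t).continuousAt
  have hcont : ContinuousOn (fun y : ℝ => (y/2)^σ * gg σ (y^2/4)) (Set.Ioi 0) := by
    apply ContinuousOn.mul
    · apply ContinuousOn.rpow_const (continuousOn_id.div_const 2)
      intro x hx
      have hx0 : (0:ℝ) < x := Set.mem_Ioi.mp hx
      exact Or.inl (by simp only [id]; positivity)
    · exact (hg.comp (by continuity : Continuous (fun y : ℝ => y^2/4))).continuousOn
  exact ContinuousOn.congr hcont (fun y hy => besselJ_eq (Set.mem_Ioi.mp hy))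

set_option maxHeartbeats 1000000 in
lemma key_bound (α σ : ℝ) (hα0 : 0 < α) (hα1 : α < 1) (hσ1 : -1/2 < σ) (hσ2 : σ < 1/2) :
    ∃ c > 0, ∀ μ : ℝ, 1 ≤ μ →
      (∫ x in (0:ℝ)..1,
        (x ^ ((1 - α) / 2) * besselJ σ (2 / (2 - α) * μ * x ^ ((2 - α) / 2)))^2) ≤ c / μ := by
  have h2α : (0:ℝ) < 2 - α := by linarith
  set p : ℝ := 1 - α + (2-α)*σ with hp
  have hp1 : 0 < p + 1 := by nlinarith
  have hpm1 : -1 < p := by linarith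
  set c : ℝ := Cs σ^2/(p+1) + 2*KK σ/(2-α) + 1 with hc
  have hcpos : 0 < c := by
    have h1 : 0 ≤ Cs σ^2/(p+1) := by positivity
    have h2 : 0 ≤ 2*KK σ/(2-α) := by
      apply div_nonneg _ h2α.le
      linarith [KK_nonneg σ]
    rw [hc]; linarith
  refine ⟨c, hcpos, fun μ hμ => ?_⟩
  have hμ0 : (0:ℝ) < μ := by linarith
  set B : ℝ := 2 / (2-α) * μ with hB
  have hbge : 1 ≤ 2 / (2-α) := by
    rw [le_div_iff₀ h2α]; linarith
  have hBμ : μ ≤ B := by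
    rw [hB]; nlinarith
  have hB1 : 1 ≤ B := le_trans hμ hBμ
  have hB0 : (0:ℝ) < B := by linarith
  set e : ℝ := (2-α)/2 with he
  have he0 : 0 < e := by rw [he]; linarith
  set x₀ : ℝ := B ^ (-(2:ℝ)/(2-α)) with hx₀
  have hx₀pos : 0 < x₀ := Real.rpow_pos_of_pos hB0 _
  have hx₀le1 : x₀ ≤ 1 := by
    apply Real.rpow_le_one_of_one_le_of_nonpos hB1
    apply div_nonpos_of_nonpos_of_nonneg <;> linarith
  have hx₀key : x₀ ^ e = B⁻¹ := by
    rw [hx₀, he, ← Real.rpow_mul hB0.le]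
    rw [show -(2:ℝ)/(2-α) * ((2-α)/2) = -1 by field_simp [h2α.ne']]
    rw [Real.rpow_neg hB0.le, Real.rpow_one]
  set θ : ℝ → ℝ := fun x => x ^ ((1 - α) / 2) * besselJ σ (B * x ^ e) with hθ
  have hx1α : ∀ x:ℝ, 0 ≤ x → (x ^ ((1-α)/2))^2 = x^(1-α) := by
    intro x hx
    rw [← Real.rpow_natCast (x ^ ((1-α)/2)) 2, ← Real.rpow_mul hx]
    congr 1
    push_cast
    ring
  have hBinv : B⁻¹ ≤ μ⁻¹ := by
    have := one_div_le_one_div_of_le hμ0 hBμ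
    simpa [one_div] using this
  have hμinv : (0:ℝ) < μ⁻¹ := by positivity
  -- small-region pointwise bound
  have hsmall : ∀ x ∈ Set.Ioc (0:ℝ) x₀, θ x^2 ≤ Cs σ^2 * B^(2*σ) * x^p := by
    rintro x ⟨hx0, hxle⟩
    have hxe : (0:ℝ) < x^e := Real.rpow_pos_of_pos hx0 e
    have hy0 : 0 < B * x^e := by positivity
    have hy1 : B * x^e ≤ 1 := by
      have h := Real.rpow_le_rpow hx0.le hxle he0.le
      rw [hx₀key] at h
      calc B * x^e ≤ B * B⁻¹ := mul_le_mul_of_nonneg_left h hB0.le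
        _ = 1 := mul_inv_cancel₀ hB0.ne'
    have hJ := besselJ_small hσ1 hy0 hy1
    have h3 : ((B*x^e)^σ)^2 = (B*x^e)^(2*σ) := by
      rw [← Real.rpow_natCast ((B*x^e)^σ) 2, ← Real.rpow_mul hy0.le]
      congr 1
      push_cast
      ring
    have hJ2 : besselJ σ (B*x^e)^2 ≤ (Cs σ)^2 * (B*x^e)^(2*σ) := by
      calc besselJ σ (B*x^e)^2 = |besselJ σ (B*x^e)|^2 := (sq_abs _).symm
        _ ≤ (Cs σ * (B*x^e)^σ)^2 := pow_le_pow_left₀ (abs_nonneg _) hJ 2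
        _ = (Cs σ)^2 * ((B*x^e)^σ)^2 := by ring
        _ = (Cs σ)^2 * (B*x^e)^(2*σ) := by rw [h3]
    have hre : (x^e)^(2*σ) = x^(e*(2*σ)) := (Real.rpow_mul hx0.le e (2*σ)).symm
    have hxx : x^(1-α) * x^(e*(2*σ)) = x^p := by
      rw [← Real.rpow_add hx0]
      congr 1
      rw [hp, he]
      ring
    calc θ x^2 = (x^((1-α)/2))^2 * besselJ σ (B*x^e)^2 := by rw [hθ]; ring
      _ = x^(1-α) * besselJ σ (B*x^e)^2 := by rw [hx1α x hx0.le]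
      _ ≤ x^(1-α) * ((Cs σ)^2 * (B*x^e)^(2*σ)) :=
          mul_le_mul_of_nonneg_left hJ2 (Real.rpow_nonneg hx0.le _)
      _ = Cs σ^2 * B^(2*σ) * x^p := by
          rw [Real.mul_rpow hB0.le hxe.le, hre, ← hxx]
          ring
  have hsmall' : ∀ x ∈ Set.Icc (0:ℝ) x₀, θ x^2 ≤ Cs σ^2 * B^(2*σ) * x^p := by
    rintro x ⟨hx0, hxle⟩
    rcases eq_or_lt_of_le hx0 with rfl | h
    · have hθ0 : θ 0 = 0 := by
        rw [hθ]
        simp only []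
        rw [Real.zero_rpow (show ((1-α)/2 : ℝ) ≠ 0 from ne_of_gt (by linarith)), zero_mul]
      rw [hθ0]
      have h1 : (0:ℝ) ≤ B^(2*σ) := Real.rpow_nonneg hB0.le _
      have h2 : (0:ℝ) ≤ (0:ℝ)^p := Real.rpow_nonneg le_rfl _
      norm_num
      positivity
    · exact hsmall x ⟨h, hxle⟩
  -- big-region pointwise bound
  have hbig : ∀ x ∈ Set.Icc x₀ 1, θ x^2 ≤ KK σ * B⁻¹ * x^(-α/2) := by
    rintro x ⟨hxge, hxle⟩
    have hx0 : (0:ℝ) < x := lt_of_lt_of_le hx₀pos hxge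
    have hxe : (0:ℝ) < x^e := Real.rpow_pos_of_pos hx0 e
    have hy1 : 1 ≤ B * x^e := by
      have h := Real.rpow_le_rpow hx₀pos.le hxge he0.le
      rw [hx₀key] at h
      calc (1:ℝ) = B * B⁻¹ := (mul_inv_cancel₀ hB0.ne').symm
        _ ≤ B * x^e := mul_le_mul_of_nonneg_left h hB0.le
    have hy0 : (0:ℝ) < B * x^e := lt_of_lt_of_le one_pos hy1
    have hJ := besselJ_large hσ1 hσ2 hy1
    have hJ2 : besselJ σ (B*x^e)^2 ≤ KK σ * (B*x^e)⁻¹ := by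
      rw [← div_eq_mul_inv]
      rw [le_div_iff₀ hy0]
      exact hJ
    have hxx : x^(1-α) * x^(-e) = x^(-α/2) := by
      rw [← Real.rpow_add hx0]
      congr 1
      rw [he]
      ring
    calc θ x^2 = (x^((1-α)/2))^2 * besselJ σ (B*x^e)^2 := by rw [hθ]; ring
      _ = x^(1-α) * besselJ σ (B*x^e)^2 := by rw [hx1α x hx0.le]
      _ ≤ x^(1-α) * (KK σ * (B*x^e)⁻¹) :=
          mul_le_mul_of_nonneg_left hJ2 (Real.rpow_nonneg hx0.le _)
      _ = KK σ * B⁻¹ * x^(-α/2) := by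
          rw [mul_inv, show (x^e)⁻¹ = x^(-e) from (Real.rpow_neg hx0.le e).symm, ← hxx]
          ring
  -- continuity on Ioi 0
  have hθc : ContinuousOn θ (Set.Ioi (0:ℝ)) := by
    rw [hθ]
    apply ContinuousOn.mul
    · apply ContinuousOn.rpow_const continuousOn_id
      intro x hx
      exact Or.inl (ne_of_gt (Set.mem_Ioi.mp hx))
    · apply (besselJ_continuousOn hσ1).comp
      · apply ContinuousOn.mul continuousOn_const
        apply ContinuousOn.rpow_const continuousOn_id
        intro x hx
        exact Or.inl (ne_of_gt (Set.mem_Ioi.mp hx))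
      · intro x hx
        have hx0 : (0:ℝ) < x := Set.mem_Ioi.mp hx
        have : (0:ℝ) < B * x^e := by
          have := Real.rpow_pos_of_pos hx0 e
          positivity
        exact Set.mem_Ioi.mpr this
  have hθsqc : ContinuousOn (fun x => θ x^2) (Set.Ioi (0:ℝ)) := hθc.pow 2
  -- integrability
  have hIbig : IntervalIntegrable (fun x => θ x^2) volume x₀ 1 := by
    apply ContinuousOn.intervalIntegrable
    apply hθsqc.mono
    rw [Set.uIcc_of_le hx₀le1]
    intro x hx
    exact lt_of_lt_of_le hx₀pos hx.1
  have hmaj1 : IntervalIntegrable (fun x:ℝ => Cs σ^2 * B^(2*σ) * x^p) volume 0 x₀ :=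
    (intervalIntegral.intervalIntegrable_rpow' hpm1).const_mul _
  have hIsmall : IntervalIntegrable (fun x => θ x^2) volume 0 x₀ := by
    rw [intervalIntegrable_iff_integrableOn_Ioc_of_le hx₀pos.le]
    have hmaj1' : IntegrableOn (fun x:ℝ => Cs σ^2 * B^(2*σ)*x^p) (Set.Ioc 0 x₀) :=
      (intervalIntegrable_iff_integrableOn_Ioc_of_le hx₀pos.le).mp hmaj1
    apply Integrable.mono hmaj1'
    · apply ContinuousOn.aestronglyMeasurable _ measurableSet_Ioc
      apply hθsqc.mono
      intro x hx
      exact hx.1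
    · rw [ae_restrict_iff' measurableSet_Ioc]
      apply ae_of_all
      intro x hx
      have h := hsmall x hx
      have hrhs : (0:ℝ) ≤ Cs σ^2 * B^(2*σ) * x^p := by
        have h1 : (0:ℝ) ≤ B^(2*σ) := Real.rpow_nonneg hB0.le _
        have h2 : (0:ℝ) ≤ x^p := Real.rpow_nonneg hx.1.le _
        positivity
      rw [Real.norm_eq_abs, Real.norm_eq_abs, abs_of_nonneg (sq_nonneg _), abs_of_nonneg hrhs]
      exact h
  -- split
  have hsplit := intervalIntegral.integral_add_adjacent_intervals hIsmall hIbig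
  rw [← hsplit]
  -- small piece
  have hx₀p1 : x₀^(p+1) = (B⁻¹)^(2+2*σ) := by
    rw [show p+1 = e*(2+2*σ) by rw [hp,he]; ring, Real.rpow_mul hx₀pos.le, hx₀key]
  have hBB : B^(2*σ) * (B⁻¹)^(2+2*σ) ≤ μ⁻¹ := by
    have h1 : (B⁻¹)^((2+2*σ:ℝ)) = (B^((2+2*σ:ℝ)))⁻¹ := Real.inv_rpow hB0.le _
    have h2 : B^(2*σ) * (B^((2+2*σ:ℝ)))⁻¹ = (B^((2:ℝ)))⁻¹ := by
      rw [show (2+2*σ:ℝ) = 2*σ + 2 by ring, Real.rpow_add hB0, mul_inv, ← mul_assoc,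
        mul_inv_cancel₀ (Real.rpow_pos_of_pos hB0 (2*σ)).ne', one_mul]
    have h3 : B^((2:ℝ)) = B^(2:ℕ) := by
      rw [← Real.rpow_natCast B 2]
      norm_num
    have h4 : μ ≤ B^(2:ℕ) := by nlinarith
    have h5 : (B^(2:ℕ))⁻¹ ≤ μ⁻¹ := by
      have := one_div_le_one_div_of_le hμ0 h4
      simpa [one_div] using this
    rw [h1, h2, h3]
    exact h5
  have hb1 : (∫ x in (0:ℝ)..x₀, θ x^2) ≤ Cs σ^2/(p+1) * μ⁻¹ := by
    have hstep := intervalIntegral.integral_mono_on hx₀pos.le hIsmall hmaj1 hsmall'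
    have hval : (∫ x in (0:ℝ)..x₀, Cs σ^2 * B^(2*σ) * x^p)
        = Cs σ^2 * B^(2*σ) * (x₀^(p+1)/(p+1)) := by
      rw [intervalIntegral.integral_const_mul, integral_rpow (Or.inl hpm1),
        Real.zero_rpow hp1.ne']
      ring
    calc (∫ x in (0:ℝ)..x₀, θ x^2) ≤ ∫ x in (0:ℝ)..x₀, Cs σ^2 * B^(2*σ) * x^p := hstep
      _ = Cs σ^2 * (B^(2*σ) * (B⁻¹)^(2+2*σ)) / (p+1) := by rw [hval, hx₀p1]; ring
      _ ≤ Cs σ^2 * μ⁻¹ / (p+1) := by gcongr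
      _ = Cs σ^2/(p+1) * μ⁻¹ := by ring
  have hmaj2 : IntervalIntegrable (fun x:ℝ => KK σ * B⁻¹ * x^(-α/2)) volume x₀ 1 :=
    (intervalIntegral.intervalIntegrable_rpow' (by linarith : (-1:ℝ) < -α/2)).const_mul _
  have hb2 : (∫ x in x₀..(1:ℝ), θ x^2) ≤ 2*KK σ/(2-α) * μ⁻¹ := by
    have hstep := intervalIntegral.integral_mono_on hx₀le1 hIbig hmaj2 hbig
    have hval : (∫ x in x₀..(1:ℝ), KK σ * B⁻¹ * x^(-α/2))
        = KK σ * B⁻¹ * (((1:ℝ) - x₀^(-α/2+1))/(-α/2+1)) := by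
      rw [intervalIntegral.integral_const_mul,
        integral_rpow (Or.inl (by linarith : (-1:ℝ) < -α/2)), Real.one_rpow]
    have hα2 : (0:ℝ) < -α/2+1 := by linarith
    have hnum : ((1:ℝ) - x₀^(-α/2+1))/(-α/2+1) ≤ 1/(-α/2+1) := by
      gcongr
      · linarith [Real.rpow_nonneg hx₀pos.le (-α/2+1)]
    have hKB : (0:ℝ) ≤ KK σ * B⁻¹ := mul_nonneg (KK_nonneg σ) (by positivity)
    calc (∫ x in x₀..(1:ℝ), θ x^2)
        ≤ KK σ * B⁻¹ * (((1:ℝ) - x₀^(-α/2+1))/(-α/2+1)) := by rw [← hval]; exact hstep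
      _ ≤ KK σ * B⁻¹ * (1/(-α/2+1)) := mul_le_mul_of_nonneg_left hnum hKB
      _ = KK σ * B⁻¹ * (2/(2-α)) := by
          rw [show -α/2+1 = (2-α)/2 by ring, one_div_div]
      _ ≤ KK σ * μ⁻¹ * (2/(2-α)) := by
          apply mul_le_mul_of_nonneg_right _ (by positivity)
          exact mul_le_mul_of_nonneg_left hBinv (KK_nonneg σ)
      _ = 2*KK σ/(2-α) * μ⁻¹ := by ring
  calc (∫ x in (0:ℝ)..x₀, θ x^2) + (∫ x in x₀..(1:ℝ), θ x^2)
      ≤ Cs σ^2/(p+1) * μ⁻¹ + 2*KK σ/(2-α) * μ⁻¹ := add_le_add hb1 hb2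
    _ ≤ c * μ⁻¹ := by
        rw [hc]
        nlinarith [hμinv]
    _ = c/μ := (div_eq_mul_inv c μ).symm

end Stmt15Aux

/-- Uniform `L²(0,1)` bounds: there is `c > 0` with
`‖θ₊(·;μ)‖_{L²(0,1)} ≤ c/√μ` and `‖θ₋(·;μ)‖_{L²(0,1)} ≤ c/√μ` for every `μ ≥ 1`. -/
theorem stmt15 (α : ℝ) (hα0 : 0 < α) (hα1 : α < 1) :
    ∃ c > 0, ∀ μ : ℝ, 1 ≤ μ →
      Real.sqrt (∫ x in (0:ℝ)..1, (thetaP α μ x) ^ 2) ≤ c / Real.sqrt μ ∧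
      Real.sqrt (∫ x in (0:ℝ)..1, (thetaM α μ x) ^ 2) ≤ c / Real.sqrt μ := by
  have h2α : (0:ℝ) < 2 - α := by linarith
  have hν0 : 0 < (1-α)/(2-α) := div_pos (by linarith) h2α
  have hν2 : (1-α)/(2-α) < 1/2 := by
    rw [div_lt_iff₀ h2α]
    linarith
  obtain ⟨cP, hcP, HP⟩ := key_bound α ((1-α)/(2-α)) hα0 hα1 (by linarith) hν2
  obtain ⟨cM, hcM, HM⟩ := key_bound α (-((1-α)/(2-α))) hα0 hα1 (by linarith) (by linarith)
  refine ⟨Real.sqrt (max cP cM), Real.sqrt_pos.mpr (lt_max_of_lt_left hcP), fun μ hμ => ?_⟩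
  have hμ0 : (0:ℝ) < μ := lt_of_lt_of_le one_pos hμ
  have hmax0 : (0:ℝ) ≤ max cP cM := le_max_of_le_left hcP.le
  have step : ∀ cc : ℝ, 0 < cc → cc ≤ max cP cM →
      ∀ I : ℝ, I ≤ cc/μ → Real.sqrt I ≤ Real.sqrt (max cP cM) / Real.sqrt μ := by
    intro cc hcc hccle I hI
    calc Real.sqrt I ≤ Real.sqrt (max cP cM / μ) := by
          apply Real.sqrt_le_sqrt
          calc I ≤ cc/μ := hI
            _ ≤ max cP cM / μ := by gcongr
      _ = Real.sqrt (max cP cM) / Real.sqrt μ := Real.sqrt_div hmax0 μ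
  constructor
  · exact step cP hcP (le_max_left _ _) _ (HP μ hμ)
  · exact step cM hcM (le_max_right _ _) _ (HM μ hμ)
end

section
/- Let 0 < α < 1 and ν = ν_α = (1−α)/(2−α). There exists a constant c > 0 such that for every μ ≥ 1, ( ∫₀¹ x^{−1} · J_ν((2/(2−α)) μ x^{(2−α)/2})² dx )^{1/2} ≤ c √μ. -/
open MeasureTheory

open intervalIntegral Real Set

lemma Gamma_half_nat (m : ℕ) :
    Gamma ((m:ℝ) + 1/2) * (m.factorial : ℝ) * 2^(2*m) = √π * ((2*m).factorial : ℝ) := by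
  have h := Real.Gamma_mul_Gamma_add_half ((m:ℝ)+1/2)
  rw [show (m:ℝ)+1/2+1/2 = (m:ℝ)+1 by ring, Real.Gamma_nat_eq_factorial,
    show (2:ℝ)*((m:ℝ)+1/2) = ((2*m:ℕ):ℝ)+1 by push_cast; ring, Real.Gamma_nat_eq_factorial,
    show (1:ℝ) - (((2*m:ℕ):ℝ)+1) = -(((2*m:ℕ):ℝ)) by ring,
    Real.rpow_neg zero_le_two, Real.rpow_natCast] at h
  rw [h]
  have h2 : ((2:ℝ)^(2*m)) ≠ 0 := by positivity
  field_simp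

lemma term_eq (ν y : ℝ) (hν : 0 < ν) (hy : 0 < y) (m : ℕ) :
    ((-1:ℝ) ^ m / (m.factorial * Real.Gamma (m + ν + 1))) * (y / 2) ^ (2 * (m : ℝ) + ν)
      = (2 * (y/2)^ν / (Gamma (ν + 1/2) * √π)) *
        (((-1:ℝ)^m * y^(2*m) / ((2*m).factorial : ℝ)) *
          (Gamma ((m:ℝ) + 1/2) * Gamma (ν + 1/2) / (2 * Gamma ((m:ℝ) + ν + 1)))) := by
  have hy2 : (0:ℝ) < y/2 := by linarith
  have hrw : (y/2) ^ (2 * (m:ℝ) + ν) = (y/2)^(2*m) * (y/2)^ν := by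
    rw [Real.rpow_add hy2, show (2 * (m:ℝ)) = ((2*m : ℕ) : ℝ) by push_cast; ring,
      Real.rpow_natCast]
  have hdup := Gamma_half_nat m
  have hG : (0:ℝ) < Gamma ((m:ℝ) + ν + 1) := Gamma_pos_of_pos (by positivity)
  have hGh : (0:ℝ) < Gamma (ν + 1/2) := Gamma_pos_of_pos (by positivity)
  have hsp : (0:ℝ) < √π := Real.sqrt_pos.mpr Real.pi_pos
  have hmf : (0:ℝ) < (m.factorial : ℝ) := by positivity
  have h2f : (0:ℝ) < ((2*m).factorial : ℝ) := by positivity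
  have hyp : (y/2)^(2*m) = y^(2*m) / 2^(2*m) := by rw [div_pow]
  rw [hrw, hyp]
  set G := Gamma ((m:ℝ) + ν + 1) with hGdef
  set Gh := Gamma (ν + 1/2) with hGhdef
  set Gm := Gamma ((m:ℝ) + 1/2) with hGmdef
  set z := (y/2)^ν with hzdef
  set sp := √π with hspdef
  field_simp
  linear_combination (-z) * hdup


lemma betaReal_eq (u v : ℝ) (hu : 0 < u) (hv : 0 < v) :
    ∫ x in (0:ℝ)..1, x ^ (u-1) * (1-x) ^ (v-1)
      = Gamma u * Gamma v / Gamma (u+v) := by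
  have h := Complex.Gamma_mul_Gamma_eq_betaIntegral
    (s := (u:ℂ)) (t := (v:ℂ)) (by simpa using hu) (by simpa using hv)
  have hcongr : Complex.betaIntegral u v
      = ((∫ x in (0:ℝ)..1, x ^ (u-1) * (1-x) ^ (v-1) : ℝ) : ℂ) := by
    have hoR := RCLike.intervalIntegral_ofReal (𝕜 := ℂ) (a := 0) (b := 1)
      (μ := volume) (f := fun x : ℝ => x ^ (u-1) * (1-x) ^ (v-1))
    have h1 : (∫ x in (0:ℝ)..1, ((x:ℂ) ^ ((u:ℂ)-1) * (1-(x:ℂ)) ^ ((v:ℂ)-1)))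
        = ∫ x in (0:ℝ)..1, ((x ^ (u-1) * (1-x) ^ (v-1) : ℝ) : ℂ) := by
      refine intervalIntegral.integral_congr fun x hx => ?_
      rw [uIcc_of_le zero_le_one] at hx
      push_cast
      rw [Complex.ofReal_cpow hx.1, Complex.ofReal_cpow (by linarith [hx.2] : (0:ℝ) ≤ 1 - x)]
      push_cast
      ring
    rw [Complex.betaIntegral, h1]
    exact_mod_cast hoR
  rw [hcongr] at h
  have hG : ∀ w : ℝ, Complex.Gamma (w : ℂ) = (Gamma w : ℂ) := fun w => Complex.Gamma_ofReal w
  rw [← Complex.ofReal_add, hG, hG, hG] at h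
  have hne : Gamma (u + v) ≠ 0 := (Gamma_pos_of_pos (by linarith)).ne'
  rw [← Complex.ofReal_mul, ← Complex.ofReal_mul, Complex.ofReal_inj] at h
  field_simp
  linarith [h]

lemma betaReal_integrable (u v : ℝ) (hu : 0 < u) (hv : 0 < v) :
    IntervalIntegrable (fun x : ℝ => x ^ (u-1) * (1-x) ^ (v-1)) volume 0 1 := by
  have h := Complex.betaIntegral_convergent (u := (u:ℂ)) (v := (v:ℂ))
    (by simpa using hu) (by simpa using hv)
  have h2 : IntervalIntegrable
      (fun x : ℝ => ((x:ℂ) ^ ((u:ℂ)-1) * (1 - (x:ℂ)) ^ ((v:ℂ)-1)).re) volume 0 1 := by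
    rw [intervalIntegrable_iff] at h ⊢
    exact h.re
  refine h2.congr ?_
  -- need a.e. or everywhere equality on uIoc
  intro x hx
  beta_reduce
  rw [uIoc_of_le zero_le_one] at hx
  rw [show ((u:ℂ)-1) = ((u-1:ℝ):ℂ) by push_cast; ring,
      show ((v:ℂ)-1) = ((v-1:ℝ):ℂ) by push_cast; ring,
      ← Complex.ofReal_cpow hx.1.le, ← Complex.ofReal_one, ← Complex.ofReal_sub,
      ← Complex.ofReal_cpow (by linarith [hx.2] : (0:ℝ) ≤ 1 - x), ← Complex.ofReal_mul,
      Complex.ofReal_re]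


lemma sq_image_Ioo : (fun t : ℝ => t^2) '' Ioo 0 1 = Ioo 0 1 := by
  ext x
  constructor
  · rintro ⟨t, ⟨ht0, ht1⟩, rfl⟩
    exact ⟨by positivity, by show t^2 < 1; nlinarith⟩
  · rintro ⟨hx0, hx1⟩
    refine ⟨Real.sqrt x, ⟨Real.sqrt_pos.mpr hx0, ?_⟩, Real.sq_sqrt hx0.le⟩
    rw [show (1:ℝ) = Real.sqrt 1 by simp]
    exact Real.sqrt_lt_sqrt hx0.le hx1

lemma sq_deriv : ∀ t ∈ Ioo (0:ℝ) 1, HasDerivWithinAt (fun t : ℝ => t^2) (2*t) (Ioo 0 1) t :=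
  fun t _ => by simpa using (hasDerivAt_pow 2 t).hasDerivWithinAt

lemma sq_injOn : InjOn (fun t : ℝ => t^2) (Ioo 0 1) := fun a ha b hb h => by
  simp only at h; nlinarith [ha.1, hb.1]

lemma smul_eq_on (ν : ℝ) (m : ℕ) : ∀ t ∈ Ioo (0:ℝ) 1,
    |2*t| • ((t^2) ^ ((m:ℝ) - 1/2) * (1 - t^2) ^ (ν - 1/2))
      = 2 * ((1 - t^2) ^ (ν - 1/2) * t^(2*m)) := by
  rintro t ⟨ht0, ht1⟩
  have h2 : (t^2 : ℝ) = t ^ (2:ℝ) := by rw [← Real.rpow_natCast t 2]; norm_num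
  rw [smul_eq_mul, abs_of_pos (by linarith), h2, ← Real.rpow_natCast t (2*m),
    ← Real.rpow_mul ht0.le]
  rw [show (2:ℝ) * ((m:ℝ) - 1/2) = ((2*m : ℕ):ℝ) - 1 by push_cast; ring]
  rw [Real.rpow_sub ht0, Real.rpow_one]
  field_simp

lemma I_integrableOn (ν : ℝ) (hν : 0 < ν) (m : ℕ) :
    IntegrableOn (fun t : ℝ => (1 - t^2) ^ (ν - 1/2) * t^(2*m)) (Ioo 0 1) := by
  have hbeta : IntegrableOn
      (fun x : ℝ => x ^ ((m:ℝ) - 1/2) * (1-x) ^ (ν - 1/2)) (Ioo 0 1) := by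
    have h := (betaReal_integrable ((m:ℝ)+1/2) (ν+1/2) (by positivity) (by linarith)).1
    rw [show (m:ℝ)+1/2-1 = (m:ℝ)-1/2 by ring, show ν+1/2-1 = ν-1/2 by ring] at h
    exact h.mono_set Ioo_subset_Ioc_self
  rw [← sq_image_Ioo,
    integrableOn_image_iff_integrableOn_abs_deriv_smul measurableSet_Ioo sq_deriv sq_injOn]
    at hbeta
  have h3 := hbeta.congr_fun (smul_eq_on ν m) measurableSet_Ioo
  have h4 : IntegrableOn
      (fun x : ℝ => (1/2 : ℝ) * (2 * ((1 - x^2) ^ (ν - 1/2) * x^(2*m)))) (Ioo 0 1) :=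
    h3.const_mul (1/2)
  exact h4.congr_fun (fun x _ => by ring) measurableSet_Ioo

lemma I_intervalIntegrable (ν : ℝ) (hν : 0 < ν) (m : ℕ) :
    IntervalIntegrable (fun t : ℝ => (1 - t^2) ^ (ν - 1/2) * t^(2*m)) volume 0 1 := by
  rw [intervalIntegrable_iff_integrableOn_Ioc_of_le zero_le_one]
  exact (I_integrableOn ν hν m).congr_set_ae Ioo_ae_eq_Ioc.symm

lemma I_value (ν : ℝ) (hν : 0 < ν) (m : ℕ) :
    ∫ t in (0:ℝ)..1, (1 - t^2) ^ (ν - 1/2) * t^(2*m)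
      = Gamma ((m:ℝ) + 1/2) * Gamma (ν + 1/2) / (2 * Gamma ((m:ℝ) + ν + 1)) := by
  have hbeta : ∫ x in Ioo (0:ℝ) 1, x ^ ((m:ℝ) - 1/2) * (1-x) ^ (ν - 1/2)
      = Gamma ((m:ℝ) + 1/2) * Gamma (ν + 1/2) / Gamma ((m:ℝ) + ν + 1) := by
    have h := betaReal_eq ((m:ℝ)+1/2) (ν+1/2) (by positivity) (by linarith)
    rw [intervalIntegral.integral_of_le zero_le_one, integral_Ioc_eq_integral_Ioo,
      show (m:ℝ)+1/2-1 = (m:ℝ)-1/2 by ring, show ν+1/2-1 = ν-1/2 by ring] at h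
    rw [show (m:ℝ) + ν + 1 = (m:ℝ)+1/2 + (ν+1/2) by ring]
    exact h
  rw [← sq_image_Ioo,
    integral_image_eq_integral_abs_deriv_smul measurableSet_Ioo sq_deriv sq_injOn] at hbeta
  rw [setIntegral_congr_fun measurableSet_Ioo (smul_eq_on ν m)] at hbeta
  rw [MeasureTheory.integral_const_mul] at hbeta
  rw [intervalIntegral.integral_of_le zero_le_one, integral_Ioc_eq_integral_Ioo]
  linear_combination hbeta / 2

lemma swap_lemma (ν : ℝ) (hν : 0 < ν) (y : ℝ) (hy : 0 < y) :
    ∫ t in (0:ℝ)..1, (1 - t^2) ^ (ν - 1/2) * Real.cos (y*t)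
      = ∑' m : ℕ, (((-1:ℝ))^m * y^(2*m) / ((2*m).factorial : ℝ)) *
          ∫ t in (0:ℝ)..1, (1 - t^2) ^ (ν - 1/2) * t^(2*m) := by
  set F : ℕ → ℝ → ℝ := fun m t =>
    (((-1:ℝ))^m * y^(2*m) / ((2*m).factorial : ℝ)) * ((1 - t^2) ^ (ν - 1/2) * t^(2*m))
    with hF
  have hpt : ∀ t : ℝ, (1 - t^2) ^ (ν - 1/2) * Real.cos (y*t) = ∑' m, F m t := by
    intro t
    rw [Real.cos_eq_tsum, ← tsum_mul_left]
    refine tsum_congr fun m => ?_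
    rw [hF]
    simp only
    rw [mul_pow]
    ring
  have hint : ∀ m, IntegrableOn (F m) (Ioc (0:ℝ) 1) := by
    intro m
    have h1 : IntegrableOn (fun t : ℝ => (1 - t^2) ^ (ν - 1/2) * t^(2*m)) (Ioc 0 1) :=
      (I_integrableOn ν hν m).congr_set_ae Ioo_ae_eq_Ioc.symm
    exact h1.const_mul _
  have habs : ∀ m : ℕ, |((-1:ℝ))^m * y^(2*m) / ((2*m).factorial : ℝ)|
      = y^(2*m) / ((2*m).factorial : ℝ) := by
    intro m
    rw [abs_div, abs_mul, abs_pow, abs_pow, abs_neg, abs_one, one_pow, one_mul,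
      abs_of_pos hy, Nat.abs_cast]
  have hnorm : ∀ m : ℕ, (∫ t in Ioc (0:ℝ) 1, ‖F m t‖)
      ≤ (y^(2*m) / ((2*m).factorial : ℝ)) *
        ∫ t in Ioc (0:ℝ) 1, (1 - t^2) ^ (ν - 1/2) * t^(2*0) := by
    intro m
    have e1 : ∀ t ∈ Ioc (0:ℝ) 1, ‖F m t‖
        = (y^(2*m) / ((2*m).factorial : ℝ)) * ((1 - t^2) ^ (ν - 1/2) * t^(2*m)) := by
      rintro t ⟨ht0, ht1⟩
      have h1t : (0:ℝ) ≤ 1 - t^2 := by nlinarith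
      rw [hF]
      simp only [Real.norm_eq_abs, abs_mul, habs m]
      rw [abs_of_nonneg (Real.rpow_nonneg h1t _), abs_of_nonneg (by positivity : (0:ℝ) ≤ t^(2*m))]
    rw [setIntegral_congr_fun measurableSet_Ioc e1, MeasureTheory.integral_const_mul]
    gcongr (y^(2*m) / ((2*m).factorial : ℝ)) * ?_
    refine setIntegral_mono_on
      ((I_integrableOn ν hν m).congr_set_ae Ioo_ae_eq_Ioc.symm)
      ((I_integrableOn ν hν 0).congr_set_ae Ioo_ae_eq_Ioc.symm)
      measurableSet_Ioc ?_
    rintro t ⟨ht0, ht1⟩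
    have h1t : (0:ℝ) ≤ 1 - t^2 := by nlinarith
    have : t^(2*m) ≤ t^(2*0) := by
      rw [pow_zero]
      exact pow_le_one₀ ht0.le ht1
    exact mul_le_mul_of_nonneg_left this (Real.rpow_nonneg h1t _)
  have hsum : Summable fun m : ℕ => ∫ t in Ioc (0:ℝ) 1, ‖F m t‖ := by
    set B := ∫ t in Ioc (0:ℝ) 1, (1 - t^2) ^ (ν - 1/2) * t^(2*0) with hB
    have hB0 : 0 ≤ B := by
      refine setIntegral_nonneg measurableSet_Ioc fun t ht => ?_
      have h1t : (0:ℝ) ≤ 1 - t^2 := by nlinarith [ht.1, ht.2]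
      exact mul_nonneg (Real.rpow_nonneg h1t _) (pow_nonneg ht.1.le _)
    refine Summable.of_nonneg_of_le
      (fun m => integral_nonneg fun t => norm_nonneg _)
      (fun m => le_trans (hnorm m) ?_)
      (((Real.summable_pow_div_factorial (y^2)).mul_right B))
    have : y^(2*m) / ((2*m).factorial : ℝ) ≤ (y^2)^m / (m.factorial : ℝ) := by
      rw [pow_mul]
      apply div_le_div_of_nonneg_left (by positivity) (by positivity)
      exact_mod_cast Nat.factorial_le (by omega)
    exact mul_le_mul_of_nonneg_right this hB0
  calc ∫ t in (0:ℝ)..1, (1 - t^2) ^ (ν - 1/2) * Real.cos (y*t)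
      = ∫ t in Ioc (0:ℝ) 1, ∑' m, F m t := by
        rw [intervalIntegral.integral_of_le zero_le_one]
        exact setIntegral_congr_fun measurableSet_Ioc fun t _ => hpt t
    _ = ∑' m, ∫ t in Ioc (0:ℝ) 1, F m t :=
        (integral_tsum_of_summable_integral_norm hint hsum).symm
    _ = ∑' m : ℕ, (((-1:ℝ))^m * y^(2*m) / ((2*m).factorial : ℝ)) *
          ∫ t in (0:ℝ)..1, (1 - t^2) ^ (ν - 1/2) * t^(2*m) := by
        refine tsum_congr fun m => ?_
        rw [hF]
        simp only
        rw [MeasureTheory.integral_const_mul, intervalIntegral.integral_of_le zero_le_one]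

lemma besselJ_repr (ν : ℝ) (hν : 0 < ν) (y : ℝ) (hy : 0 < y) :
    besselJ ν y = (2 * (y/2)^ν / (Gamma (ν + 1/2) * √π)) *
      ∫ t in (0:ℝ)..1, (1 - t^2) ^ (ν - 1/2) * Real.cos (y*t) := by
  rw [swap_lemma ν hν y hy, ← tsum_mul_left, besselJ]
  refine tsum_congr fun m => ?_
  rw [I_value ν hν m]
  exact term_eq ν y hν hy m

lemma besselJ_bound (ν : ℝ) (hν : 0 < ν) (y : ℝ) (hy : 0 < y) :
    |besselJ ν y| ≤ (y/2)^ν / Gamma (ν + 1) := by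
  have hGh : (0:ℝ) < Gamma (ν + 1/2) := Gamma_pos_of_pos (by positivity)
  have hG1 : (0:ℝ) < Gamma (ν + 1) := Gamma_pos_of_pos (by positivity)
  have hsp : (0:ℝ) < √π := Real.sqrt_pos.mpr Real.pi_pos
  have hz : (0:ℝ) ≤ (y/2)^ν := Real.rpow_nonneg (by linarith) _
  rw [besselJ_repr ν hν y hy, abs_mul,
    abs_of_nonneg (by positivity : (0:ℝ) ≤ 2 * (y/2)^ν / (Gamma (ν + 1/2) * √π))]
  have hint0 := I_intervalIntegrable ν hν 0
  have hm0 : AEStronglyMeasurable (fun t:ℝ => (1 - t^2) ^ (ν - 1/2))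
      (volume.restrict (Set.uIoc (0:ℝ) 1)) := by
    rw [uIoc_of_le zero_le_one]
    have h := (hint0.1 :
      IntegrableOn (fun t:ℝ => (1 - t^2) ^ (ν - 1/2) * t^(2*0)) (Ioc 0 1) volume).aestronglyMeasurable
    simpa using h
  have hmeas : AEStronglyMeasurable (fun t:ℝ => (1 - t^2) ^ (ν - 1/2) * Real.cos (y*t))
      (volume.restrict (Set.uIoc (0:ℝ) 1)) :=
    hm0.mul (Real.continuous_cos.comp (continuous_const.mul continuous_id)).aestronglyMeasurable
  have hcosint : IntervalIntegrable (fun t:ℝ => (1 - t^2) ^ (ν - 1/2) * Real.cos (y*t))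
      volume 0 1 := by
    refine hint0.mono_fun hmeas ?_
    filter_upwards [ae_restrict_mem measurableSet_uIoc] with t ht
    rw [uIoc_of_le zero_le_one] at ht
    have h1t : (0:ℝ) ≤ 1 - t^2 := by nlinarith [ht.1, ht.2]
    rw [Real.norm_eq_abs, Real.norm_eq_abs, abs_mul, abs_mul,
      abs_of_nonneg (Real.rpow_nonneg h1t _)]
    calc (1 - t^2) ^ (ν - 1/2) * |Real.cos (y*t)|
        ≤ (1 - t^2) ^ (ν - 1/2) * 1 :=
          mul_le_mul_of_nonneg_left (Real.abs_cos_le_one _) (Real.rpow_nonneg h1t _)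
      _ ≤ (1 - t^2) ^ (ν - 1/2) * |t^(2*0)| := by simp
  have h1 : |∫ t in (0:ℝ)..1, (1 - t^2) ^ (ν - 1/2) * Real.cos (y*t)|
      ≤ ∫ t in (0:ℝ)..1, |(1 - t^2) ^ (ν - 1/2) * Real.cos (y*t)| :=
    intervalIntegral.abs_integral_le_integral_abs zero_le_one
  have h2 : (∫ t in (0:ℝ)..1, |(1 - t^2) ^ (ν - 1/2) * Real.cos (y*t)|)
      ≤ ∫ t in (0:ℝ)..1, (1 - t^2) ^ (ν - 1/2) * t^(2*0) := by
    refine intervalIntegral.integral_mono_on zero_le_one hcosint.abs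
      (I_intervalIntegrable ν hν 0) fun t ht => ?_
    have h1t : (0:ℝ) ≤ 1 - t^2 := by nlinarith [ht.1, ht.2]
    rw [abs_mul, abs_of_nonneg (Real.rpow_nonneg h1t _)]
    simpa using mul_le_mul_of_nonneg_left (Real.abs_cos_le_one (y*t)) (Real.rpow_nonneg h1t _)
  have h3 := I_value ν hν 0
  rw [show ((0:ℕ):ℝ) + 1/2 = 1/2 by norm_num, show ((0:ℕ):ℝ) + ν + 1 = ν + 1 by norm_num,
    Real.Gamma_one_half_eq] at h3
  rw [h3] at h2
  calc 2 * (y/2)^ν / (Gamma (ν + 1/2) * √π) * |∫ t in (0:ℝ)..1, (1 - t^2) ^ (ν - 1/2) * Real.cos (y*t)|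
      ≤ 2 * (y/2)^ν / (Gamma (ν + 1/2) * √π) * (√π * Gamma (ν + 1/2) / (2 * Gamma (ν + 1))) := by
        gcongr
        exact h1.trans h2
    _ = (y/2)^ν / Gamma (ν + 1) := by field_simp

/-- With `ν = (1-α)/(2-α)`, there is `c > 0` such that for all `μ ≥ 1`,
`(∫₀¹ x⁻¹ J_ν((2/(2-α)) μ x^{(2-α)/2})² dx)^{1/2} ≤ c √μ`. -/
theorem stmt16 (α : ℝ) (hα0 : 0 < α) (hα1 : α < 1) :
    ∃ c > 0, ∀ μ : ℝ, 1 ≤ μ →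
      Real.sqrt (∫ x in (0:ℝ)..1,
          x⁻¹ * (besselJ ((1 - α) / (2 - α)) (2 / (2 - α) * μ * x ^ ((2 - α) / 2))) ^ 2)
        ≤ c * Real.sqrt μ := by
  have h2α : (0:ℝ) < 2 - α := by linarith
  have h1α : (0:ℝ) < 1 - α := by linarith
  set ν := (1 - α) / (2 - α) with hνdef
  set a := 2 / (2 - α) with hadef
  have hν : 0 < ν := div_pos h1α h2α
  have hν2 : 2*ν ≤ 1 := by
    rw [hνdef, show 2*((1-α)/(2-α)) = (2-2*α)/(2-α) by ring, div_le_one h2α]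
    linarith
  have hGν : (0:ℝ) < Gamma (ν+1) := Gamma_pos_of_pos (by linarith)
  have ha : 0 < a := by rw [hadef]; positivity
  set D := (a/2)^(2*ν)/(Gamma (ν+1))^2 * (1/(1-α)) with hD
  have hD0 : 0 ≤ D := by
    rw [hD]
    have : (0:ℝ) ≤ (a/2)^(2*ν) := Real.rpow_nonneg (by linarith) _
    positivity
  refine ⟨Real.sqrt D + 1, by positivity, fun μ hμ => ?_⟩
  have hμ0 : 0 < μ := by linarith
  have hexp : (2-α)/2 * (2*ν) = 1 - α := by
    rw [hνdef]; field_simp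
  have key : (∫ x in (0:ℝ)..1, x⁻¹ * (besselJ ν (a * μ * x ^ ((2-α)/2)))^2)
      ≤ D * μ^(2*ν) := by
    rw [intervalIntegral.integral_of_le zero_le_one]
    have hgint : IntegrableOn
        (fun x:ℝ => ((a/2)^(2*ν)/(Gamma (ν+1))^2 * μ^(2*ν)) * x^(-α)) (Ioc 0 1) :=
      ((intervalIntegral.intervalIntegrable_rpow' (by linarith : (-1:ℝ) < -α)).1).const_mul _
    have h0 : 0 ≤ᵐ[volume.restrict (Ioc (0:ℝ) 1)]
        fun x => x⁻¹ * (besselJ ν (a * μ * x ^ ((2-α)/2)))^2 := by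
      filter_upwards [ae_restrict_mem measurableSet_Ioc] with x hx
      have : (0:ℝ) ≤ x⁻¹ := inv_nonneg.mpr hx.1.le
      positivity
    have hle : (fun x:ℝ => x⁻¹ * (besselJ ν (a * μ * x ^ ((2-α)/2)))^2)
        ≤ᵐ[volume.restrict (Ioc (0:ℝ) 1)]
        fun x => ((a/2)^(2*ν)/(Gamma (ν+1))^2 * μ^(2*ν)) * x^(-α) := by
      filter_upwards [ae_restrict_mem measurableSet_Ioc] with x hx
      obtain ⟨hx0, hx1⟩ := hx
      have hxp : (0:ℝ) < x ^ ((2-α)/2) := Real.rpow_pos_of_pos hx0 _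
      have hy : (0:ℝ) < a * μ * x ^ ((2-α)/2) := by positivity
      have hb := besselJ_bound ν hν _ hy
      have hsq : (besselJ ν (a * μ * x ^ ((2-α)/2)))^2
          ≤ ((a * μ * x ^ ((2-α)/2)/2)^ν / Gamma (ν+1))^2 := by
        rw [← sq_abs]
        exact pow_le_pow_left₀ (abs_nonneg _) hb 2
      have heq : x⁻¹ * ((a * μ * x ^ ((2-α)/2)/2)^ν / Gamma (ν+1))^2
          = ((a/2)^(2*ν)/(Gamma (ν+1))^2 * μ^(2*ν)) * x^(-α) := by
        have hw : (0:ℝ) < a * μ * x ^ ((2-α)/2) / 2 := by positivity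
        have e1 : ((a * μ * x ^ ((2-α)/2)/2)^ν)^2 = (a * μ * x ^ ((2-α)/2)/2)^(2*ν) := by
          rw [show (2*ν) = ν*2 by ring, Real.rpow_mul hw.le, Real.rpow_two]
        have e2 : (a * μ * x ^ ((2-α)/2)/2)^(2*ν)
            = (a/2)^(2*ν) * μ^(2*ν) * x^(1-α) := by
          rw [show a * μ * x ^ ((2-α)/2)/2 = (a/2) * μ * x ^ ((2-α)/2) by ring,
            Real.mul_rpow (by positivity) hxp.le,
            Real.mul_rpow (by positivity) hμ0.le,
            ← Real.rpow_mul hx0.le, hexp]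
        have e3 : x^(-α) = x⁻¹ * x^(1-α) := by
          rw [show -α = -1 + (1-α) by ring, Real.rpow_add hx0, Real.rpow_neg_one]
        rw [div_pow, e1, e2, e3]
        ring
      calc x⁻¹ * (besselJ ν (a * μ * x ^ ((2-α)/2)))^2
          ≤ x⁻¹ * ((a * μ * x ^ ((2-α)/2)/2)^ν / Gamma (ν+1))^2 :=
            mul_le_mul_of_nonneg_left hsq (inv_nonneg.mpr hx0.le)
        _ = _ := heq
    refine (integral_mono_of_nonneg h0 hgint hle).trans ?_
    rw [MeasureTheory.integral_const_mul, ← intervalIntegral.integral_of_le zero_le_one,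
      integral_rpow (Or.inl (by linarith : (-1:ℝ) < -α))]
    rw [Real.zero_rpow (by linarith : -α + 1 ≠ 0), Real.one_rpow]
    rw [hD]
    apply le_of_eq
    ring
  have key2 : (∫ x in (0:ℝ)..1, x⁻¹ * (besselJ ν (a * μ * x ^ ((2-α)/2)))^2) ≤ D * μ := by
    refine key.trans (mul_le_mul_of_nonneg_left ?_ hD0)
    calc μ^(2*ν) ≤ μ^(1:ℝ) := Real.rpow_le_rpow_of_exponent_le hμ hν2
      _ = μ := Real.rpow_one μ
  calc Real.sqrt (∫ x in (0:ℝ)..1, x⁻¹ * (besselJ ν (a * μ * x ^ ((2-α)/2)))^2)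
      ≤ Real.sqrt (D * μ) := Real.sqrt_le_sqrt key2
    _ = Real.sqrt D * Real.sqrt μ := Real.sqrt_mul hD0 μ
    _ ≤ (Real.sqrt D + 1) * Real.sqrt μ :=
        mul_le_mul_of_nonneg_right (by linarith) (Real.sqrt_nonneg μ)
end
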